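/- Let G and H be short dicotic games. If G ≻ 0 (mod D⁻), then it is not the case that G + H + (−H) ≺ 0 (mod D⁻). -/

import Mathlib

universe u

namespace SetTheory

/-- Re-creation of Mathlib's (Dec 2024) `SetTheory.PGame`, removed from Mathlib since. -/
inductive PGame : Type (u + 1)
  | mk : ∀ α β : Type u, (α → PGame) → (β → PGame) → PGame

namespace PGame

def LeftMoves : PGame → Type u
  | mk l _ _ _ => l

def RightMoves : PGame → Type u
  | mk _ r _ _ => r

def moveLeft : ∀ g : PGame, LeftMoves g → PGame
  | mk _l _ L _ => L

def moveRight : ∀ g : PGame, RightMoves g → PGame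
  | mk _ _r _ R => R

inductive IsOption : PGame → PGame → Prop
  | moveLeft {x : PGame} (i : x.LeftMoves) : IsOption (x.moveLeft i) x
  | moveRight {x : PGame} (i : x.RightMoves) : IsOption (x.moveRight i) x

instance : Zero PGame := ⟨⟨PEmpty, PEmpty, PEmpty.elim, PEmpty.elim⟩⟩

def star : PGame.{u} := ⟨PUnit, PUnit, fun _ => 0, fun _ => 0⟩

def neg : PGame → PGame
  | ⟨l, r, L, R⟩ => ⟨r, l, fun i => neg (R i), fun i => neg (L i)⟩

instance : Neg PGame := ⟨neg⟩

noncomputable instance : Add PGame.{u} :=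
  ⟨fun x y => by
    induction x generalizing y with | mk xl xr _ _ IHxl IHxr => _
    induction y with | mk yl yr yL yR IHyl IHyr => _
    have y := mk yl yr yL yR
    refine ⟨xl ⊕ yl, xr ⊕ yr, Sum.rec ?_ ?_, Sum.rec ?_ ?_⟩
    · exact fun i => IHxl i y
    · exact IHyl
    · exact fun i => IHxr i y
    · exact IHyr⟩

def Identical : PGame.{u} → PGame.{u} → Prop
  | mk _ _ xL xR, mk _ _ yL yR =>
    Relator.BiTotal (fun i j ↦ Identical (xL i) (yL j)) ∧
      Relator.BiTotal (fun i j ↦ Identical (xR i) (yR j))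

noncomputable def birthday : PGame.{u} → Ordinal.{u}
  | ⟨_, _, xL, xR⟩ =>
    max (Ordinal.lsub.{u, u} fun i => birthday (xL i)) (Ordinal.lsub.{u, u} fun i => birthday (xR i))

theorem birthday_moveLeft_lt {x : PGame} (i : x.LeftMoves) :
    (x.moveLeft i).birthday < x.birthday := by
  cases x; rw [birthday]; exact lt_max_of_lt_left (Ordinal.lt_lsub _ i)

theorem birthday_moveRight_lt {x : PGame} (i : x.RightMoves) :
    (x.moveRight i).birthday < x.birthday := by
  cases x; rw [birthday]; exact lt_max_of_lt_right (Ordinal.lt_lsub _ i)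

end PGame

end SetTheory

open SetTheory PGame

namespace MisereDicot

def Follower (G' G : PGame) : Prop := Relation.ReflTransGen PGame.IsOption G' G

def IsShort (G : PGame) : Prop :=
  ∀ G', Follower G' G → Finite G'.LeftMoves ∧ Finite G'.RightMoves

def Dicot (G : PGame) : Prop :=
  ∀ G', Follower G' G → (IsEmpty G'.LeftMoves ↔ IsEmpty G'.RightMoves)

mutual
def LeftWinsFirst (G : PGame) : Prop :=
  IsEmpty G.LeftMoves ∨ ∃ i, ¬ RightWinsFirst (G.moveLeft i)
termination_by G.birthday
decreasing_by exact PGame.birthday_moveLeft_lt i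

def RightWinsFirst (G : PGame) : Prop :=
  IsEmpty G.RightMoves ∨ ∃ j, ¬ LeftWinsFirst (G.moveRight j)
termination_by G.birthday
decreasing_by exact PGame.birthday_moveRight_lt j
end

inductive MOutcome : Type
  | L | N | P | R
deriving DecidableEq

instance : LE MOutcome := ⟨fun a b => a = b ∨ a = .R ∨ b = .L⟩

noncomputable def outcome (G : PGame) : MOutcome := by
  classical
  exact if LeftWinsFirst G then (if RightWinsFirst G then .N else .L)
        else (if RightWinsFirst G then .R else .P)

def Dge (G H : PGame) : Prop :=
  ∀ X : PGame, IsShort X → Dicot X → outcome (H + X) ≤ outcome (G + X)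

def Deq (G H : PGame) : Prop :=
  ∀ X : PGame, IsShort X → Dicot X → outcome (G + X) = outcome (H + X)

def Dgt (G H : PGame) : Prop := Dge G H ∧ ¬ Deq G H

def DInvertible (G : PGame) : Prop :=
  ∃ H : PGame, IsShort H ∧ Dicot H ∧ Deq (G + H) 0

/-- The left option `G^L_i` is reversible through its right option `(G^L_i)^R_j ≼ G`. -/
def LeftReversibleAt (G : PGame) (i : G.LeftMoves) (j : (G.moveLeft i).RightMoves) : Prop :=
  Dge G ((G.moveLeft i).moveRight j)

def RightReversibleAt (G : PGame) (j : G.RightMoves) (i : (G.moveRight j).LeftMoves) : Prop :=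
  Dge ((G.moveRight j).moveLeft i) G

/-- `G` has a dominated left option (removable by the Domination theorem). -/
def LeftDominated (G : PGame) : Prop :=
  ∃ i i' : G.LeftMoves, ¬ (G.moveLeft i).Identical (G.moveLeft i') ∧
    Dge (G.moveLeft i') (G.moveLeft i)

def RightDominated (G : PGame) : Prop :=
  ∃ j j' : G.RightMoves, ¬ (G.moveRight j).Identical (G.moveRight j') ∧
    Dge (G.moveRight j) (G.moveRight j')

/-- `G` has a non-atomic reversible left option (bypassable). -/
def LeftNonAtomicReversible (G : PGame) : Prop :=
  ∃ i j, LeftReversibleAt G i j ∧ Nonempty ((G.moveLeft i).moveRight j).LeftMoves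

def RightNonAtomicReversible (G : PGame) : Prop :=
  ∃ j i, RightReversibleAt G j i ∧ Nonempty ((G.moveRight j).moveLeft i).RightMoves

/-- `G` has an atomic-reversible left option to which the atomic-reversibility
replacement applies nontrivially (i.e. changing the set of options): either some
other left option is a winning first move for Left (so the option is removable),
or the option is not already `*`. -/
def LeftAtomicReducible (G : PGame) : Prop :=
  ∃ i j, LeftReversibleAt G i j ∧ IsEmpty ((G.moveLeft i).moveRight j).LeftMoves ∧
    ((∃ i', ¬ (G.moveLeft i').Identical (G.moveLeft i) ∧ ¬ RightWinsFirst (G.moveLeft i')) ∨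
      ¬ (G.moveLeft i).Identical star)

def RightAtomicReducible (G : PGame) : Prop :=
  ∃ j i, RightReversibleAt G j i ∧ IsEmpty ((G.moveRight j).moveLeft i).RightMoves ∧
    ((∃ j', ¬ (G.moveRight j').Identical (G.moveRight j) ∧ ¬ LeftWinsFirst (G.moveRight j')) ∨
      ¬ (G.moveRight j).Identical star)

/-- The Substitution theorem applies to `G`: `G = {A | C}` with `A` an
atomic-reversible left option and `C` an atomic-reversible right option. -/
def SubstitutionReducible (G : PGame) : Prop :=
  (∀ i i' : G.LeftMoves, (G.moveLeft i).Identical (G.moveLeft i')) ∧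
  (∀ j j' : G.RightMoves, (G.moveRight j).Identical (G.moveRight j')) ∧
  (∃ i j, LeftReversibleAt G i j ∧ IsEmpty ((G.moveLeft i).moveRight j).LeftMoves) ∧
  (∃ j i, RightReversibleAt G j i ∧ IsEmpty ((G.moveRight j).moveLeft i).RightMoves)

/-- `G` is in canonical form: no follower admits any of the misère-dicot
simplifications (domination, non-atomic reversibility, atomic reversibility,
substitution) producing an equivalent game with a different set of options. -/
def CanonicalForm (G : PGame) : Prop :=
  ∀ G', Follower G' G →
    ¬ (LeftDominated G' ∨ RightDominated G' ∨
       LeftNonAtomicReversible G' ∨ RightNonAtomicReversible G' ∨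
       LeftAtomicReducible G' ∨ RightAtomicReducible G' ∨
       SubstitutionReducible G')

/-- The game `*2 = {0, * | 0, *}`. -/
def star2 : PGame :=
  PGame.mk Bool Bool (fun b => cond b star 0) (fun b => cond b star 0)

open Classical in
/-- The adjoint `G°` of `G`. -/
noncomputable def adjoint : PGame → PGame
  | PGame.mk l r L R =>
    if IsEmpty l ∧ IsEmpty r then star
    else if IsEmpty l then PGame.mk r PUnit (fun j => adjoint (R j)) (fun _ => 0)
    else if IsEmpty r then PGame.mk PUnit l (fun _ => 0) (fun i => adjoint (L i))
    else PGame.mk r l (fun j => adjoint (R j)) (fun i => adjoint (L i))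

/-- A universe of short games: a class closed under taking options, disjunctive
sums and conjugates. -/
structure GameUniverse where
  mem : PGame → Prop
  short_mem : ∀ G, mem G → IsShort G
  isOption_mem : ∀ G G', mem G → PGame.IsOption G' G → mem G'
  add_mem : ∀ G H, mem G → mem H → mem (G + H)
  neg_mem : ∀ G, mem G → mem (-G)

/-- `G ≽ H` modulo the universe `U`. -/
def UGe (U : GameUniverse) (G H : PGame) : Prop :=
  ∀ X : PGame, U.mem X → outcome (H + X) ≤ outcome (G + X)

/-- `G = H` modulo the universe `U`. -/
def UEq (U : GameUniverse) (G H : PGame) : Prop :=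
  ∀ X : PGame, U.mem X → outcome (G + X) = outcome (H + X)

/-- `G ≻ H` modulo the universe `U`. -/
def UGt (U : GameUniverse) (G H : PGame) : Prop := UGe U G H ∧ ¬ UEq U G H

/-- `J` is invertible in the universe `U`. -/
def UInvertible (U : GameUniverse) (J : PGame) : Prop :=
  ∃ J' : PGame, U.mem J' ∧ UEq U (J + J') 0

end MisereDicot

namespace SetTheory
namespace PGame

theorem isOption_iff {x y : PGame} :
    IsOption x y ↔ (∃ i, x = y.moveLeft i) ∨ ∃ j, x = y.moveRight j := by
  constructor
  · rintro (i | j)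
    · exact Or.inl ⟨i, rfl⟩
    · exact Or.inr ⟨j, rfl⟩
  · rintro (⟨i, rfl⟩ | ⟨j, rfl⟩)
    · exact IsOption.moveLeft i
    · exact IsOption.moveRight j

theorem neg_neg' (x : PGame) : -(-x) = x := by
  induction x with
  | mk l r L R ihL ihR =>
    show mk l r (fun i => -(-(L i))) (fun j => -(-(R j))) = mk l r L R
    simp only [ihL, ihR]

instance : InvolutiveNeg PGame := { neg := neg, neg_neg := neg_neg' }

theorem isOption_neg {x y : PGame} : IsOption x (-y) ↔ IsOption (-x) y := by
  rw [isOption_iff, isOption_iff]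
  cases y with
  | mk l r L R =>
    constructor
    · rintro (⟨i, rfl⟩ | ⟨j, rfl⟩)
      · exact Or.inr ⟨i, neg_neg' (R i)⟩
      · exact Or.inl ⟨j, neg_neg' (L j)⟩
    · rintro (⟨i, h⟩ | ⟨j, h⟩)
      · refine Or.inr ⟨i, ?_⟩
        have := congrArg Neg.neg h
        rw [neg_neg'] at this
        exact this
      · refine Or.inl ⟨j, ?_⟩
        have := congrArg Neg.neg h
        rw [neg_neg'] at this
        exact this

theorem leftMoves_neg : ∀ x : PGame, (-x).LeftMoves = x.RightMoves
  | ⟨_, _, _, _⟩ => rfl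

theorem rightMoves_neg : ∀ x : PGame, (-x).RightMoves = x.LeftMoves
  | ⟨_, _, _, _⟩ => rfl

theorem leftMoves_add : ∀ x y : PGame.{u}, (x + y).LeftMoves = (x.LeftMoves ⊕ y.LeftMoves)
  | ⟨_, _, _, _⟩, ⟨_, _, _, _⟩ => rfl

theorem rightMoves_add : ∀ x y : PGame.{u}, (x + y).RightMoves = (x.RightMoves ⊕ y.RightMoves)
  | ⟨_, _, _, _⟩, ⟨_, _, _, _⟩ => rfl

def toLeftMovesAdd {x y : PGame.{u}} : x.LeftMoves ⊕ y.LeftMoves ≃ (x + y).LeftMoves :=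
  Equiv.cast (leftMoves_add x y).symm

def toRightMovesAdd {x y : PGame.{u}} : x.RightMoves ⊕ y.RightMoves ≃ (x + y).RightMoves :=
  Equiv.cast (rightMoves_add x y).symm

theorem add_moveLeft_inl {x y : PGame.{u}} (i : x.LeftMoves) :
    (x + y).moveLeft (toLeftMovesAdd (Sum.inl i)) = x.moveLeft i + y := by
  cases x; cases y; rfl

theorem add_moveLeft_inr {x y : PGame.{u}} (i : y.LeftMoves) :
    (x + y).moveLeft (toLeftMovesAdd (Sum.inr i)) = x + y.moveLeft i := by
  cases x; cases y; rfl

theorem add_moveRight_inl {x y : PGame.{u}} (i : x.RightMoves) :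
    (x + y).moveRight (toRightMovesAdd (Sum.inl i)) = x.moveRight i + y := by
  cases x; cases y; rfl

theorem add_moveRight_inr {x y : PGame.{u}} (i : y.RightMoves) :
    (x + y).moveRight (toRightMovesAdd (Sum.inr i)) = x + y.moveRight i := by
  cases x; cases y; rfl

theorem leftMoves_add_cases {x y : PGame.{u}} (k : (x + y).LeftMoves)
    {P : (x + y).LeftMoves → Prop}
    (hl : ∀ i, P (toLeftMovesAdd (Sum.inl i))) (hr : ∀ i, P (toLeftMovesAdd (Sum.inr i))) :
    P k := by
  obtain ⟨s, rfl⟩ : ∃ s, toLeftMovesAdd s = k := ⟨_, Equiv.apply_symm_apply _ k⟩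
  rcases s with i | i
  · exact hl i
  · exact hr i

theorem rightMoves_add_cases {x y : PGame.{u}} (k : (x + y).RightMoves)
    {P : (x + y).RightMoves → Prop}
    (hl : ∀ i, P (toRightMovesAdd (Sum.inl i))) (hr : ∀ i, P (toRightMovesAdd (Sum.inr i))) :
    P k := by
  obtain ⟨s, rfl⟩ : ∃ s, toRightMovesAdd s = k := ⟨_, Equiv.apply_symm_apply _ k⟩
  rcases s with i | i
  · exact hl i
  · exact hr i

inductive Relabelling : PGame.{u} → PGame.{u} → Type (u + 1)
  | mk : ∀ {x y : PGame} (L : x.LeftMoves ≃ y.LeftMoves) (R : x.RightMoves ≃ y.RightMoves),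
      (∀ i, Relabelling (x.moveLeft i) (y.moveLeft (L i))) →
        (∀ j, Relabelling (x.moveRight j) (y.moveRight (R j))) → Relabelling x y

infixl:50 " ≡r " => SetTheory.PGame.Relabelling

noncomputable def Relabelling.refl (x : PGame.{u}) : x ≡r x := by
  induction x with
  | mk l r L R ihL ihR => exact ⟨Equiv.refl _, Equiv.refl _, ihL, ihR⟩

noncomputable def Relabelling.transAux : ∀ (x y : PGame.{u}), x ≡r y → ∀ (z : PGame.{u}), y ≡r z → x ≡r z := by
  intro x y h1
  induction h1 with
  | @mk x y L₁ R₁ hL₁ hR₁ ihL ihR =>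
    intro z h2
    cases h2 with
    | mk L₂ R₂ hL₂ hR₂ =>
      exact ⟨L₁.trans L₂, R₁.trans R₂, fun i => ihL i _ (hL₂ _), fun j => ihR j _ (hR₂ _)⟩

noncomputable def Relabelling.trans {x y z : PGame.{u}} (h1 : x ≡r y) (h2 : y ≡r z) : x ≡r z :=
  Relabelling.transAux x y h1 z h2

noncomputable def Relabelling.addCongrAux :
    ∀ (w x : PGame.{u}), w ≡r x → ∀ (y z : PGame.{u}), y ≡r z → w + y ≡r x + z := by
  intro w x h1
  induction h1 with
  | @mk w x L₁ R₁ hL₁ hR₁ ih1L ih1R =>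
    intro y z h2
    induction h2 with
    | @mk y z L₂ R₂ hL₂ hR₂ ih2L ih2R =>
      have Hyz : y ≡r z := Relabelling.mk L₂ R₂ hL₂ hR₂
      cases w; cases x; cases y; cases z
      refine ⟨Equiv.sumCongr L₁ L₂, Equiv.sumCongr R₁ R₂, ?_, ?_⟩
      · rintro (i | j)
        · exact ih1L i _ _ Hyz
        · exact ih2L j
      · rintro (i | j)
        · exact ih1R i _ _ Hyz
        · exact ih2R j

noncomputable def Relabelling.addCongr {w x y z : PGame.{u}} (h1 : w ≡r x) (h2 : y ≡r z) : w + y ≡r x + z :=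
  Relabelling.addCongrAux w x h1 y z h2

noncomputable def zeroAddRelabelling (x : PGame.{u}) : 0 + x ≡r x := by
  induction x with
  | mk xl xr xL xR ihL ihR =>
    refine ⟨Equiv.emptySum PEmpty xl, Equiv.emptySum PEmpty xr, ?_, ?_⟩
    · rintro (i | i)
      · exact PEmpty.elim i
      · exact ihL i
    · rintro (i | i)
      · exact PEmpty.elim i
      · exact ihR i

noncomputable def addCommRelabelling (x y : PGame.{u}) : x + y ≡r y + x := by
  induction x generalizing y with
  | mk xl xr xL xR ihxL ihxR =>
    induction y with
    | mk yl yr yL yR ihyL ihyR =>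
      refine ⟨Equiv.sumComm _ _, Equiv.sumComm _ _, ?_, ?_⟩
      · rintro (i | j)
        · exact ihxL i _
        · exact ihyL j
      · rintro (i | j)
        · exact ihxR i _
        · exact ihyR j

noncomputable def addAssocRelabelling (x y z : PGame.{u}) : x + y + z ≡r x + (y + z) := by
  induction x generalizing y z with
  | mk xl xr xL xR ihxL ihxR =>
    induction y generalizing z with
    | mk yl yr yL yR ihyL ihyR =>
      induction z with
      | mk zl zr zL zR ihzL ihzR =>
        refine ⟨Equiv.sumAssoc _ _ _, Equiv.sumAssoc _ _ _, ?_, ?_⟩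
        · rintro ((i | i) | i)
          · exact ihxL i _ _
          · exact ihyL i _
          · exact ihzL i
        · rintro ((i | i) | i)
          · exact ihxR i _ _
          · exact ihyR i _
          · exact ihzR i

noncomputable def negAddRelabelling (x y : PGame.{u}) : -(x + y) ≡r -x + -y := by
  induction x generalizing y with
  | mk xl xr xL xR ihxL ihxR =>
    induction y with
    | mk yl yr yL yR ihyL ihyR =>
      refine ⟨Equiv.refl _, Equiv.refl _, ?_, ?_⟩
      · rintro (i | j)
        · exact ihxR i _
        · exact ihyR j
      · rintro (i | j)
        · exact ihxL i _
        · exact ihyL j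

end PGame
end SetTheory

namespace MisereDicot

/- ======================== auxiliary lemmas ======================== -/

theorem lwf_iff (G : PGame) : LeftWinsFirst G ↔
    (IsEmpty G.LeftMoves ∨ ∃ i, ¬ RightWinsFirst (G.moveLeft i)) := by
  rw [LeftWinsFirst]

theorem rwf_iff (G : PGame) : RightWinsFirst G ↔
    (IsEmpty G.RightMoves ∨ ∃ j, ¬ LeftWinsFirst (G.moveRight j)) := by
  rw [RightWinsFirst]

theorem neg_wf : ∀ G : PGame,
    (LeftWinsFirst (-G) ↔ RightWinsFirst G) ∧ (RightWinsFirst (-G) ↔ LeftWinsFirst G) := by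
  intro G
  induction G with
  | mk l r L R ihL ihR =>
    constructor
    · rw [lwf_iff, rwf_iff]
      show (IsEmpty r ∨ ∃ j : r, ¬ RightWinsFirst (-(R j))) ↔ _
      refine or_congr Iff.rfl (exists_congr fun j => ?_)
      rw [(ihR j).2]; exact Iff.rfl
    · rw [rwf_iff, lwf_iff]
      show (IsEmpty l ∨ ∃ i : l, ¬ LeftWinsFirst (-(L i))) ↔ _
      refine or_congr Iff.rfl (exists_congr fun i => ?_)
      rw [(ihL i).1]; exact Iff.rfl

theorem rel_wf : ∀ {G H : PGame}, (G ≡r H) →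
    ((LeftWinsFirst G ↔ LeftWinsFirst H) ∧ (RightWinsFirst G ↔ RightWinsFirst H)) := by
  intro G H rel
  induction rel with
  | mk L R hL hR ihL ihR =>
    constructor
    · rw [lwf_iff, lwf_iff]
      refine or_congr L.isEmpty_congr ?_
      constructor
      · rintro ⟨i, hi⟩; exact ⟨L i, fun h => hi ((ihL i).2.2 h)⟩
      · rintro ⟨i, hi⟩
        exact ⟨L.symm i, fun h => hi (by
          have := (ihL (L.symm i)).2.1 h
          rwa [L.apply_symm_apply] at this)⟩
    · rw [rwf_iff, rwf_iff]
      refine or_congr R.isEmpty_congr ?_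
      constructor
      · rintro ⟨j, hj⟩; exact ⟨R j, fun h => hj ((ihR j).1.2 h)⟩
      · rintro ⟨j, hj⟩
        exact ⟨R.symm j, fun h => hj (by
          have := (ihR (R.symm j)).1.1 h
          rwa [R.apply_symm_apply] at this)⟩

theorem mo_le_def (a b : MOutcome) : a ≤ b ↔ (a = b ∨ a = MOutcome.R ∨ b = MOutcome.L) :=
  Iff.rfl

theorem mo_le_antisymm {a b : MOutcome} (h1 : a ≤ b) (h2 : b ≤ a) : a = b := by
  cases a <;> cases b <;> simp_all [mo_le_def]

theorem outcome_le_iff (A B : PGame) : (outcome A ≤ outcome B) ↔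
    ((LeftWinsFirst A → LeftWinsFirst B) ∧ (RightWinsFirst B → RightWinsFirst A)) := by
  unfold outcome
  by_cases h1 : LeftWinsFirst A <;> by_cases h2 : RightWinsFirst A <;>
    by_cases h3 : LeftWinsFirst B <;> by_cases h4 : RightWinsFirst B <;>
    simp [h1, h2, h3, h4, mo_le_def]

theorem follower_trans {G G' G'' : PGame} (h : Follower G'' G') (h' : Follower G' G) :
    Follower G'' G := Relation.ReflTransGen.trans h h'

theorem isShort_follower {G G' : PGame} (h : IsShort G) (hf : Follower G' G) : IsShort G' :=
  fun G'' hf' => h G'' (follower_trans hf' hf)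

theorem dicot_follower {G G' : PGame} (h : Dicot G) (hf : Follower G' G) : Dicot G' :=
  fun G'' hf' => h G'' (follower_trans hf' hf)

theorem follower_neg {Y G' : PGame} (h : Follower G' (-Y)) :
    ∃ X', Follower X' Y ∧ G' = -X' := by
  induction h using Relation.ReflTransGen.head_induction_on with
  | refl => exact ⟨Y, Relation.ReflTransGen.refl, rfl⟩
  | head hstep _ ih =>
    obtain ⟨X', hX', rfl⟩ := ih
    rename_i a _
    have h2 : PGame.IsOption (-a) X' := PGame.isOption_neg.mp hstep
    exact ⟨-a, Relation.ReflTransGen.head h2 hX', (neg_neg a).symm⟩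

theorem follower_add {A B G' : PGame} (h : Follower G' (A + B)) :
    ∃ A' B', Follower A' A ∧ Follower B' B ∧ G' = A' + B' := by
  induction h using Relation.ReflTransGen.head_induction_on with
  | refl => exact ⟨A, B, Relation.ReflTransGen.refl, Relation.ReflTransGen.refl, rfl⟩
  | head hstep _ ih =>
    obtain ⟨A', B', hA', hB', rfl⟩ := ih
    cases hstep with
    | moveLeft i =>
      refine PGame.leftMoves_add_cases i
        (P := fun k => ∃ A'' B'', Follower A'' A ∧ Follower B'' B ∧
          (A' + B').moveLeft k = A'' + B'') ?_ ?_
      · intro i'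
        rw [PGame.add_moveLeft_inl]
        exact ⟨A'.moveLeft i', B',
          Relation.ReflTransGen.head (PGame.IsOption.moveLeft i') hA', hB', rfl⟩
      · intro i'
        rw [PGame.add_moveLeft_inr]
        exact ⟨A', B'.moveLeft i', hA',
          Relation.ReflTransGen.head (PGame.IsOption.moveLeft i') hB', rfl⟩
    | moveRight j =>
      refine PGame.rightMoves_add_cases j
        (P := fun k => ∃ A'' B'', Follower A'' A ∧ Follower B'' B ∧
          (A' + B').moveRight k = A'' + B'') ?_ ?_
      · intro j'
        rw [PGame.add_moveRight_inl]
        exact ⟨A'.moveRight j', B',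
          Relation.ReflTransGen.head (PGame.IsOption.moveRight j') hA', hB', rfl⟩
      · intro j'
        rw [PGame.add_moveRight_inr]
        exact ⟨A', B'.moveRight j', hA',
          Relation.ReflTransGen.head (PGame.IsOption.moveRight j') hB', rfl⟩

theorem isShort_neg {Y : PGame} (h : IsShort Y) : IsShort (-Y) := by
  intro G' hf
  obtain ⟨X', hX', rfl⟩ := follower_neg hf
  obtain ⟨hl, hr⟩ := h X' hX'
  constructor
  · rw [PGame.leftMoves_neg]; exact hr
  · rw [PGame.rightMoves_neg]; exact hl

theorem dicot_neg {Y : PGame} (h : Dicot Y) : Dicot (-Y) := by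
  intro G' hf
  obtain ⟨X', hX', rfl⟩ := follower_neg hf
  rw [PGame.leftMoves_neg, PGame.rightMoves_neg]
  exact (h X' hX').symm

theorem isShort_add {A B : PGame} (hA : IsShort A) (hB : IsShort B) : IsShort (A + B) := by
  intro G' hf
  obtain ⟨A', B', hA', hB', rfl⟩ := follower_add hf
  obtain ⟨hAl, hAr⟩ := hA A' hA'
  obtain ⟨hBl, hBr⟩ := hB B' hB'
  constructor
  · rw [PGame.leftMoves_add]; exact Finite.instSum
  · rw [PGame.rightMoves_add]; exact Finite.instSum

theorem dicot_add {A B : PGame} (hA : Dicot A) (hB : Dicot B) : Dicot (A + B) := by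
  intro G' hf
  obtain ⟨A', B', hA', hB', rfl⟩ := follower_add hf
  rw [PGame.leftMoves_add, PGame.rightMoves_add, isEmpty_sum, isEmpty_sum,
    hA A' hA', hB B' hB']

/- ======================== end auxiliary lemmas ======================== -/

/-- Let `G` and `H` be short dicotic games. If `G ≻ 0` (mod `D⁻`),
then it is not the case that `G + H + (−H) ≺ 0` (mod `D⁻`). -/
theorem stmt0 (G H : PGame) (hGs : IsShort G) (hGd : Dicot G)
    (hHs : IsShort H) (hHd : Dicot H) (hG : Dgt G 0) :
    ¬ Dgt 0 (G + H + (-H)) := by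
  rintro ⟨hge, hne⟩
  have h1 : ∀ X : PGame, IsShort X → Dicot X → outcome (0 + X) ≤ outcome (G + X) := hG.1
  have h2 : ∀ X : PGame, IsShort X → Dicot X →
      outcome ((G + H + -H) + X) ≤ outcome (0 + X) := hge
  unfold Deq at hne
  push_neg at hne
  obtain ⟨X₂, hXs, hXd, hXne⟩ := hne
  have hnHs : IsShort (-H) := isShort_neg hHs
  have hnHd : Dicot (-H) := dicot_neg hHd
  have hKs : IsShort (H + -H) := isShort_add hHs hnHs
  have hKd : Dicot (H + -H) := dicot_add hHd hnHd
  have hnXs : IsShort (-X₂) := isShort_neg hXs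
  have hnXd : Dicot (-X₂) := dicot_neg hXd
  have relGKX : ∀ X : PGame, (G + H + -H) + X ≡r G + ((H + -H) + X) := fun X =>
    ((PGame.addAssocRelabelling G H (-H)).addCongr (PGame.Relabelling.refl X)).trans
      (PGame.addAssocRelabelling G (H + -H) X)
  have relNegK : -(H + -H) ≡r H + -H := by
    have r1 := PGame.negAddRelabelling H (-H)
    rw [neg_neg] at r1
    exact r1.trans (PGame.addCommRelabelling (-H) H)
  have stepA : ∀ X' : PGame, IsShort X' → Dicot X' →
      (LeftWinsFirst ((H + -H) + X') → LeftWinsFirst X') ∧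
      (RightWinsFirst X' → RightWinsFirst ((H + -H) + X')) := by
    intro X' hs hd
    have hKXs : IsShort ((H + -H) + X') := isShort_add hKs hs
    have hKXd : Dicot ((H + -H) + X') := dicot_add hKd hd
    have c1 := (outcome_le_iff _ _).1 (h1 _ hKXs hKXd)
    have c2 := (outcome_le_iff _ _).1 (h2 X' hs hd)
    have rz := rel_wf (PGame.zeroAddRelabelling ((H + -H) + X'))
    have ra := rel_wf (relGKX X')
    have rz2 := rel_wf (PGame.zeroAddRelabelling X')
    constructor
    · intro hl
      exact rz2.1.1 (c2.1 (ra.1.2 (c1.1 (rz.1.2 hl))))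
    · intro hr
      exact rz.2.1 (c1.2 (ra.2.1 (c2.2 (rz2.2.2 hr))))
  have sA := stepA (-X₂) hnXs hnXd
  have nX := neg_wf X₂
  have nKX := neg_wf ((H + -H) + X₂)
  have nKnX := neg_wf ((H + -H) + -X₂)
  have rB1 : -((H + -H) + -X₂) ≡r (H + -H) + X₂ := by
    have r := (PGame.negAddRelabelling (H + -H) (-X₂)).trans
      (relNegK.addCongr (PGame.Relabelling.refl (-(-X₂))))
    rwa [neg_neg] at r
  have rB2 : -((H + -H) + X₂) ≡r (H + -H) + -X₂ :=
    (PGame.negAddRelabelling (H + -H) X₂).trans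
      (relNegK.addCongr (PGame.Relabelling.refl (-X₂)))
  have sB1 : LeftWinsFirst X₂ → LeftWinsFirst ((H + -H) + X₂) := by
    intro h
    exact (rel_wf rB1).1.1 (nKnX.1.2 (sA.2 (nX.2.2 h)))
  have sB2 : RightWinsFirst ((H + -H) + X₂) → RightWinsFirst X₂ := by
    intro h
    exact nX.1.1 (sA.1 ((rel_wf rB2).1.1 (nKX.1.2 h)))
  have hKXs : IsShort ((H + -H) + X₂) := isShort_add hKs hXs
  have hKXd : Dicot ((H + -H) + X₂) := dicot_add hKd hXd
  have c1 := (outcome_le_iff _ _).1 (h1 _ hKXs hKXd)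
  have rz := rel_wf (PGame.zeroAddRelabelling ((H + -H) + X₂))
  have rz2 := rel_wf (PGame.zeroAddRelabelling X₂)
  have ra := rel_wf (relGKX X₂)
  have final_le : outcome (0 + X₂) ≤ outcome ((G + H + -H) + X₂) := by
    rw [outcome_le_iff]
    constructor
    · intro h
      exact ra.1.2 (c1.1 (rz.1.2 (sB1 (rz2.1.1 h))))
    · intro h
      exact rz2.2.2 (sB2 (rz.2.1 (c1.2 (ra.2.1 h))))
  exact hXne (mo_le_antisymm final_le (h2 X₂ hXs hXd))


end MisereDicot
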